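/- Fix q ∈ ((31 − 12√3)/23, (12√3 − 8)/23) and let δ* = min{4/q², 4/(1−q)²}. Let g_δ(x) = x·(1 − δ·(1−x)·(x−q)). Then there exists δ_q ∈ (0, δ*) such that for every δ ∈ (δ_q, δ*], the map g_δ has a periodic point of period 3, i.e. a point x ∈ [0,1] with g_δ³(x) = x, g_δ(x) ≠ x, and g_δ²(x) ≠ x. -/

import Mathlib

noncomputable def gq (q δ x : ℝ) : ℝ := x * (1 - δ * (1 - x) * (x - q))

lemma gq_conj (q δ y : ℝ) : gq q δ (1 - y) = 1 - gq (1 - q) δ y := by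
  unfold gq; ring

lemma gq_zero (q δ : ℝ) : gq q δ 0 = 0 := by unfold gq; ring

lemma gq_drop (q : ℝ) (h : q < 1) : gq q (4 / (1 - q) ^ 2) ((1 + q) / 2) = 0 := by
  have h1 : (1 - q) ≠ 0 := by intro h2; linarith
  unfold gq
  field_simp
  ring

set_option maxHeartbeats 2000000 in
lemma hump_key (q : ℝ) (h1 : 111 / 250 ≤ q) (h2 : q ≤ 1 / 2) :
    (8 : ℝ) / 25 + 3 / 4 * q
      < gq q (4 / (1 - q) ^ 2) (gq q (4 / (1 - q) ^ 2)
          (gq q (4 / (1 - q) ^ 2) (8 / 25 + 3 / 4 * q))) := by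
  have hq1 : (0:ℝ) < 1 - q := by linarith
  have hne : (1 - q) ≠ 0 := ne_of_gt hq1
  have hA : gq q (4 / (1 - q) ^ 2) (8 / 25 + 3 / 4 * q) * (1 - q) ^ 2 = ((648 : ℝ)/15625) * q^0 + ((-9 : ℝ)/500) * q^1 + ((-19 : ℝ)/100) * q^2 + ((3 : ℝ)/16) * q^3 := by
    unfold gq; field_simp; ring
  set A : ℝ := gq q (4 / (1 - q) ^ 2) (8 / 25 + 3 / 4 * q) with hAdef
  have hB : gq q (4 / (1 - q) ^ 2) A * (1 - q) ^ 8 = ((133047516168 : ℝ)/3814697265625) * q^0 + ((-10798807257 : ℝ)/122070312500) * q^1 + ((-1667273081 : ℝ)/12207031250) * q^2 + ((1161088699 : ℝ)/1953125000) * q^3 + ((-57532149 : ℝ)/156250000) * q^4 + ((-12531543 : ℝ)/25000000) * q^5 + ((625129 : ℝ)/1000000) * q^6 + ((-2183 : ℝ)/160000) * q^7 + ((-281 : ℝ)/1280) * q^8 + ((75 : ℝ)/1024) * q^9 := by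
    have e : gq q (4 / (1 - q) ^ 2) A * (1 - q) ^ 8 =
        (A * (1 - q) ^ 2) * (1 - q) ^ 6
          - 4 * ((A * (1 - q) ^ 2) * ((1 - q) ^ 2 - A * (1 - q) ^ 2)
              * (A * (1 - q) ^ 2 - q * (1 - q) ^ 2)) := by
      unfold gq; field_simp
    rw [e, hA]; ring
  set B : ℝ := gq q (4 / (1 - q) ^ 2) A with hBdef
  have hC : gq q (4 / (1 - q) ^ 2) B * (1 - q) ^ 26 = ((1675411199786567182987060819167099528 : ℝ)/55511151231257827021181583404541015625) * q^0 + ((-922458369425990288213932179630858441 : ℝ)/1776356839400250464677810668945312500) * q^1 + ((1401192710751471851052905184300779819 : ℝ)/355271367880050092935562133789062500) * q^2 + ((-952113819373790514627875467933799111 : ℝ)/56843418860808014869689941406250000) * q^3 + ((88870657488336513002560414352201477 : ℝ)/2273736754432320594787597656250000) * q^4 + ((-7929877021595020220815227991524141 : ℝ)/363797880709171295166015625000000) * q^5 + ((-1263256594229093501849794742222389 : ℝ)/7275957614183425903320312500000) * q^6 + ((381562716181966736855799132926367 : ℝ)/582076609134674072265625000000) * q^7 + ((-53515812611790703316918960709069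 : ℝ)/46566128730773925781250000000) * q^8 + ((1270019082685533573802390901009 : ℝ)/1490116119384765625000000000) * q^9 + ((1925813306561449147305601323 : ℝ)/2384185791015625000000000) * q^10 + ((-140175484726804933447822120067 : ℝ)/47683715820312500000000000) * q^11 + ((3220441201033038225411655569 : ℝ)/953674316406250000000000) * q^12 + ((-153949163012662851536095933 : ℝ)/152587890625000000000000) * q^13 + ((-7321268283820319768167087 : ℝ)/3051757812500000000000) * q^14 + ((1856908523364723667487659 : ℝ)/488281250000000000000) * q^15 + ((-352204752295035260527471 : ℝ)/156250000000000000000) * q^16 + ((-7815540749552339333677 : ℝ)/25000000000000000000) * q^17 + ((1617231046800481890191 : ℝ)/1000000000000000000) * q^18 + ((-205002730536238525439 : ℝ)/160000000000000000) * q^19 + ((498880938480550719 : ℝ)/1280000000000000) * q^20 + ((146487018287003677 : ℝ)/1024000000000000) * q^21 + ((-178936612157901 : ℝ)/819200000000) * q^22 + ((97974162619539 : ℝ)/819200000000) * q^23 + ((-10289587115419 : ℝ)/262144000000) * q^24 + ((339968138423 : ℝ)/41943040000) * q^25 + ((-328906739 : ℝ)/335544320) * q^26 + ((14322675 : ℝ)/268435456)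 * q^27 := by
    have e : gq q (4 / (1 - q) ^ 2) B * (1 - q) ^ 26 =
        (B * (1 - q) ^ 8) * (1 - q) ^ 18
          - 4 * ((B * (1 - q) ^ 8) * ((1 - q) ^ 8 - B * (1 - q) ^ 8)
              * (B * (1 - q) ^ 8 - q * (1 - q) ^ 8)) := by
      unfold gq; field_simp
    rw [e, hB]; ring
  have key : (gq q (4 / (1 - q) ^ 2) B - (8 / 25 + 3 / 4 * q)) * ((1 - q) ^ 26 * 33 ^ 27) =
      ((240197390261350190248794512639545782294766884003875140788075945013 : ℝ)/14901161193847656250000000000000000000000000000000000000000000000000000000) * (500*q - 222)^0 * (255 - 500*q)^27 + (((2606216216041563736308996871249135199952251253689551983337524230499 : ℝ)/5960464477539062500000000000000000000000000000000000000000000000000000000) * (500*q - 222)^1 * (255 - 500*q)^26 + (((13436664284125015599331030600214049456756910903807534469075666116323 : ℝ)/2384185791015625000000000000000000000000000000000000000000000000000000000) * (500*q - 222)^2 * (255 - 500*q)^25 + (((43937092630999797436622699296921018748196646581625830585748964905869 : ℝ)/953674316406250000000000000000000000000000000000000000000000000000000000) * (500*q - 222)^3 * (255 - 500*q)^24 +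 (((51272038472250236319950999969004683608704213657188761476064832224419 : ℝ)/190734863281250000000000000000000000000000000000000000000000000000000000) * (500*q - 222)^4 * (255 - 500*q)^23 + (((18214816036466679248375367030550887794501667567960573065499651327153 : ℝ)/15258789062500000000000000000000000000000000000000000000000000000000000) * (500*q - 222)^5 * (255 - 500*q)^22 + (((25630765325622792095357997814416152567295409959510606169421217573549 : ℝ)/6103515625000000000000000000000000000000000000000000000000000000000000) * (500*q - 222)^6 * (255 - 500*q)^21 + (((146759625815864530075240829726452841434448172783985392495489436502847 : ℝ)/12207031250000000000000000000000000000000000000000000000000000000000000) * (500*q - 222)^7 * (255 - 500*q)^20 + (((278819806983407182926232678105275625816949457968622059330144807608647 : ℝ)/9765625000000000000000000000000000000000000000000000000000000000000000) * (500*q - 222)^8 * (255 - 500*q)^19 + (((222753049346284325302901406974445896516015537503548293046092410251297 : ℝ)/3906250000000000000000000000000000000000000000000000000000000000000000) * (500*q - 222)^9 * (255 - 500*q)^18 + (((151193300311372235873393913146664061480798626980839189897926790317801 : ℝ)/1562500000000000000000000000000000000000000000000000000000000000000000) * (500*q - 222)^10 * (255 - 500*q)^17 + (((87830315068944199129951422046916892731673053978713732997306662125447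 : ℝ)/625000000000000000000000000000000000000000000000000000000000000000000) * (500*q - 222)^11 * (255 - 500*q)^16 + (((10973451869690554251087732229855648215782388981994582897642858894977 : ℝ)/62500000000000000000000000000000000000000000000000000000000000000000) * (500*q - 222)^12 * (255 - 500*q)^15 + (((4733685403521433306718440223119837344683682220433215564204742474919 : ℝ)/25000000000000000000000000000000000000000000000000000000000000000000) * (500*q - 222)^13 * (255 - 500*q)^14 + (((1765639698674252467143310459729654841772107892890026328009914685379 : ℝ)/10000000000000000000000000000000000000000000000000000000000000000000) * (500*q - 222)^14 * (255 - 500*q)^13 + (((569565124453423340656304248476485014512424464540115689278854674813 : ℝ)/4000000000000000000000000000000000000000000000000000000000000000000) * (500*q - 222)^15 * (255 - 500*q)^12 + (((634776122574439401779230379197389133594814165924166945498832662387 : ℝ)/6400000000000000000000000000000000000000000000000000000000000000000) * (500*q - 222)^16 * (255 - 500*q)^11 + (((152320139401950092851985399191145290758814115438305137892568761461 : ℝ)/2560000000000000000000000000000000000000000000000000000000000000000) * (500*q - 222)^17 * (255 - 500*q)^10 + (((31331185338823410169955241466764890974326948225093784120447894917 : ℝ)/1024000000000000000000000000000000000000000000000000000000000000000)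 * (500*q - 222)^18 * (255 - 500*q)^9 + (((5486705506100928559272786447117636629114256081901664873994281931 : ℝ)/409600000000000000000000000000000000000000000000000000000000000000) * (500*q - 222)^19 * (255 - 500*q)^8 + (((405126186716807291052915228653962475880899688235247677838725419 : ℝ)/81920000000000000000000000000000000000000000000000000000000000000) * (500*q - 222)^20 * (255 - 500*q)^7 + (((9958504199811065972500653205017364726903941283348947729497289 : ℝ)/6553600000000000000000000000000000000000000000000000000000000000) * (500*q - 222)^21 * (255 - 500*q)^6 + (((5001188711458934824967930824545664624479134218693498633587849 : ℝ)/13107200000000000000000000000000000000000000000000000000000000000) * (500*q - 222)^22 * (255 - 500*q)^5 + (((399960098132698838047956901130588157651164659229670428093271 : ℝ)/5242880000000000000000000000000000000000000000000000000000000000) * (500*q - 222)^23 * (255 - 500*q)^4 + (((9798940497391200153233996034537099830268289781173113196413 : ℝ)/838860800000000000000000000000000000000000000000000000000000000) * (500*q - 222)^24 * (255 - 500*q)^3 + (((2158565741752316826991694670646902527753986926671448696999 : ℝ)/1677721600000000000000000000000000000000000000000000000000000000) * (500*q - 222)^25 * (255 - 500*q)^2 + (((60906564400813742348907671840634526394738387982808138191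 : ℝ)/671088640000000000000000000000000000000000000000000000000000000) * (500*q - 222)^26 * (255 - 500*q)^1 + (((826748622017044850419228107546872211315041875343402497 : ℝ)/268435456000000000000000000000000000000000000000000000000000000) * (500*q - 222)^27 * (255 - 500*q)^0))))))))))))))))))))))))))) := by
    have e2 : (gq q (4 / (1 - q) ^ 2) B - (8 / 25 + 3 / 4 * q)) * ((1 - q) ^ 26 * 33 ^ 27) =
        (gq q (4 / (1 - q) ^ 2) B * (1 - q) ^ 26) * 33 ^ 27
          - (8 / 25 + 3 / 4 * q) * (1 - q) ^ 26 * 33 ^ 27 := by ring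
    rw [e2, hC]; ring
  have hu : (0:ℝ) ≤ 500 * q - 222 := by linarith
  have hv : (0:ℝ) ≤ 255 - 500 * q := by linarith
  have r1 : (0:ℝ) ≤ ((2606216216041563736308996871249135199952251253689551983337524230499 : ℝ)/5960464477539062500000000000000000000000000000000000000000000000000000000) * (500*q - 222)^1 * (255 - 500*q)^26 := mul_nonneg (mul_nonneg (by norm_num) (pow_nonneg hu 1)) (pow_nonneg hv 26)
  have r2 : (0:ℝ) ≤ ((13436664284125015599331030600214049456756910903807534469075666116323 : ℝ)/2384185791015625000000000000000000000000000000000000000000000000000000000) * (500*q - 222)^2 * (255 - 500*q)^25 := mul_nonneg (mul_nonneg (by norm_num) (pow_nonneg hu 2)) (pow_nonneg hv 25)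
  have r3 : (0:ℝ) ≤ ((43937092630999797436622699296921018748196646581625830585748964905869 : ℝ)/953674316406250000000000000000000000000000000000000000000000000000000000) * (500*q - 222)^3 * (255 - 500*q)^24 := mul_nonneg (mul_nonneg (by norm_num) (pow_nonneg hu 3)) (pow_nonneg hv 24)
  have r4 : (0:ℝ) ≤ ((51272038472250236319950999969004683608704213657188761476064832224419 : ℝ)/190734863281250000000000000000000000000000000000000000000000000000000000) * (500*q - 222)^4 * (255 - 500*q)^23 := mul_nonneg (mul_nonneg (by norm_num) (pow_nonneg hu 4)) (pow_nonneg hv 23)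
  have r5 : (0:ℝ) ≤ ((18214816036466679248375367030550887794501667567960573065499651327153 : ℝ)/15258789062500000000000000000000000000000000000000000000000000000000000) * (500*q - 222)^5 * (255 - 500*q)^22 := mul_nonneg (mul_nonneg (by norm_num) (pow_nonneg hu 5)) (pow_nonneg hv 22)
  have r6 : (0:ℝ) ≤ ((25630765325622792095357997814416152567295409959510606169421217573549 : ℝ)/6103515625000000000000000000000000000000000000000000000000000000000000) * (500*q - 222)^6 * (255 - 500*q)^21 := mul_nonneg (mul_nonneg (by norm_num) (pow_nonneg hu 6)) (pow_nonneg hv 21)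
  have r7 : (0:ℝ) ≤ ((146759625815864530075240829726452841434448172783985392495489436502847 : ℝ)/12207031250000000000000000000000000000000000000000000000000000000000000) * (500*q - 222)^7 * (255 - 500*q)^20 := mul_nonneg (mul_nonneg (by norm_num) (pow_nonneg hu 7)) (pow_nonneg hv 20)
  have r8 : (0:ℝ) ≤ ((278819806983407182926232678105275625816949457968622059330144807608647 : ℝ)/9765625000000000000000000000000000000000000000000000000000000000000000) * (500*q - 222)^8 * (255 - 500*q)^19 := mul_nonneg (mul_nonneg (by norm_num) (pow_nonneg hu 8)) (pow_nonneg hv 19)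
  have r9 : (0:ℝ) ≤ ((222753049346284325302901406974445896516015537503548293046092410251297 : ℝ)/3906250000000000000000000000000000000000000000000000000000000000000000) * (500*q - 222)^9 * (255 - 500*q)^18 := mul_nonneg (mul_nonneg (by norm_num) (pow_nonneg hu 9)) (pow_nonneg hv 18)
  have r10 : (0:ℝ) ≤ ((151193300311372235873393913146664061480798626980839189897926790317801 : ℝ)/1562500000000000000000000000000000000000000000000000000000000000000000) * (500*q - 222)^10 * (255 - 500*q)^17 := mul_nonneg (mul_nonneg (by norm_num) (pow_nonneg hu 10)) (pow_nonneg hv 17)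
  have r11 : (0:ℝ) ≤ ((87830315068944199129951422046916892731673053978713732997306662125447 : ℝ)/625000000000000000000000000000000000000000000000000000000000000000000) * (500*q - 222)^11 * (255 - 500*q)^16 := mul_nonneg (mul_nonneg (by norm_num) (pow_nonneg hu 11)) (pow_nonneg hv 16)
  have r12 : (0:ℝ) ≤ ((10973451869690554251087732229855648215782388981994582897642858894977 : ℝ)/62500000000000000000000000000000000000000000000000000000000000000000) * (500*q - 222)^12 * (255 - 500*q)^15 := mul_nonneg (mul_nonneg (by norm_num) (pow_nonneg hu 12)) (pow_nonneg hv 15)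
  have r13 : (0:ℝ) ≤ ((4733685403521433306718440223119837344683682220433215564204742474919 : ℝ)/25000000000000000000000000000000000000000000000000000000000000000000) * (500*q - 222)^13 * (255 - 500*q)^14 := mul_nonneg (mul_nonneg (by norm_num) (pow_nonneg hu 13)) (pow_nonneg hv 14)
  have r14 : (0:ℝ) ≤ ((1765639698674252467143310459729654841772107892890026328009914685379 : ℝ)/10000000000000000000000000000000000000000000000000000000000000000000) * (500*q - 222)^14 * (255 - 500*q)^13 := mul_nonneg (mul_nonneg (by norm_num) (pow_nonneg hu 14)) (pow_nonneg hv 13)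
  have r15 : (0:ℝ) ≤ ((569565124453423340656304248476485014512424464540115689278854674813 : ℝ)/4000000000000000000000000000000000000000000000000000000000000000000) * (500*q - 222)^15 * (255 - 500*q)^12 := mul_nonneg (mul_nonneg (by norm_num) (pow_nonneg hu 15)) (pow_nonneg hv 12)
  have r16 : (0:ℝ) ≤ ((634776122574439401779230379197389133594814165924166945498832662387 : ℝ)/6400000000000000000000000000000000000000000000000000000000000000000) * (500*q - 222)^16 * (255 - 500*q)^11 := mul_nonneg (mul_nonneg (by norm_num) (pow_nonneg hu 16)) (pow_nonneg hv 11)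
  have r17 : (0:ℝ) ≤ ((152320139401950092851985399191145290758814115438305137892568761461 : ℝ)/2560000000000000000000000000000000000000000000000000000000000000000) * (500*q - 222)^17 * (255 - 500*q)^10 := mul_nonneg (mul_nonneg (by norm_num) (pow_nonneg hu 17)) (pow_nonneg hv 10)
  have r18 : (0:ℝ) ≤ ((31331185338823410169955241466764890974326948225093784120447894917 : ℝ)/1024000000000000000000000000000000000000000000000000000000000000000) * (500*q - 222)^18 * (255 - 500*q)^9 := mul_nonneg (mul_nonneg (by norm_num) (pow_nonneg hu 18)) (pow_nonneg hv 9)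
  have r19 : (0:ℝ) ≤ ((5486705506100928559272786447117636629114256081901664873994281931 : ℝ)/409600000000000000000000000000000000000000000000000000000000000000) * (500*q - 222)^19 * (255 - 500*q)^8 := mul_nonneg (mul_nonneg (by norm_num) (pow_nonneg hu 19)) (pow_nonneg hv 8)
  have r20 : (0:ℝ) ≤ ((405126186716807291052915228653962475880899688235247677838725419 : ℝ)/81920000000000000000000000000000000000000000000000000000000000000) * (500*q - 222)^20 * (255 - 500*q)^7 := mul_nonneg (mul_nonneg (by norm_num) (pow_nonneg hu 20)) (pow_nonneg hv 7)
  have r21 : (0:ℝ) ≤ ((9958504199811065972500653205017364726903941283348947729497289 : ℝ)/6553600000000000000000000000000000000000000000000000000000000000) * (500*q - 222)^21 * (255 - 500*q)^6 := mul_nonneg (mul_nonneg (by norm_num) (pow_nonneg hu 21)) (pow_nonneg hv 6)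
  have r22 : (0:ℝ) ≤ ((5001188711458934824967930824545664624479134218693498633587849 : ℝ)/13107200000000000000000000000000000000000000000000000000000000000) * (500*q - 222)^22 * (255 - 500*q)^5 := mul_nonneg (mul_nonneg (by norm_num) (pow_nonneg hu 22)) (pow_nonneg hv 5)
  have r23 : (0:ℝ) ≤ ((399960098132698838047956901130588157651164659229670428093271 : ℝ)/5242880000000000000000000000000000000000000000000000000000000000) * (500*q - 222)^23 * (255 - 500*q)^4 := mul_nonneg (mul_nonneg (by norm_num) (pow_nonneg hu 23)) (pow_nonneg hv 4)
  have r24 : (0:ℝ) ≤ ((9798940497391200153233996034537099830268289781173113196413 : ℝ)/838860800000000000000000000000000000000000000000000000000000000) * (500*q - 222)^24 * (255 - 500*q)^3 := mul_nonneg (mul_nonneg (by norm_num) (pow_nonneg hu 24)) (pow_nonneg hv 3)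
  have r25 : (0:ℝ) ≤ ((2158565741752316826991694670646902527753986926671448696999 : ℝ)/1677721600000000000000000000000000000000000000000000000000000000) * (500*q - 222)^25 * (255 - 500*q)^2 := mul_nonneg (mul_nonneg (by norm_num) (pow_nonneg hu 25)) (pow_nonneg hv 2)
  have r26 : (0:ℝ) ≤ ((60906564400813742348907671840634526394738387982808138191 : ℝ)/671088640000000000000000000000000000000000000000000000000000000) * (500*q - 222)^26 * (255 - 500*q)^1 := mul_nonneg (mul_nonneg (by norm_num) (pow_nonneg hu 26)) (pow_nonneg hv 1)
  have r27 : (0:ℝ) ≤ ((826748622017044850419228107546872211315041875343402497 : ℝ)/268435456000000000000000000000000000000000000000000000000000000) * (500*q - 222)^27 * (255 - 500*q)^0 := mul_nonneg (mul_nonneg (by norm_num) (pow_nonneg hu 27)) (pow_nonneg hv 0)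
  have hv' : (0:ℝ) < 255 - 500 * q := by linarith
  have t0 : (0:ℝ) < ((240197390261350190248794512639545782294766884003875140788075945013 : ℝ)/14901161193847656250000000000000000000000000000000000000000000000000000000) * (500*q - 222)^0 * (255 - 500*q)^27 :=
    mul_pos (mul_pos (by norm_num) (by norm_num : (0:ℝ) < (500 * q - 222) ^ 0))
      (pow_pos hv' 27)
  have hpos : (0:ℝ) < ((240197390261350190248794512639545782294766884003875140788075945013 : ℝ)/14901161193847656250000000000000000000000000000000000000000000000000000000) * (500*q - 222)^0 * (255 - 500*q)^27 + (((2606216216041563736308996871249135199952251253689551983337524230499 : ℝ)/5960464477539062500000000000000000000000000000000000000000000000000000000) * (500*q - 222)^1 * (255 - 500*q)^26 + (((13436664284125015599331030600214049456756910903807534469075666116323 : ℝ)/2384185791015625000000000000000000000000000000000000000000000000000000000) * (500*q - 222)^2 * (255 - 500*q)^25 + (((43937092630999797436622699296921018748196646581625830585748964905869 : ℝ)/953674316406250000000000000000000000000000000000000000000000000000000000) * (500*q - 222)^3 * (255 - 500*q)^24 + (((51272038472250236319950999969004683608704213657188761476064832224419 : ℝ)/190734863281250000000000000000000000000000000000000000000000000000000000)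 * (500*q - 222)^4 * (255 - 500*q)^23 + (((18214816036466679248375367030550887794501667567960573065499651327153 : ℝ)/15258789062500000000000000000000000000000000000000000000000000000000000) * (500*q - 222)^5 * (255 - 500*q)^22 + (((25630765325622792095357997814416152567295409959510606169421217573549 : ℝ)/6103515625000000000000000000000000000000000000000000000000000000000000) * (500*q - 222)^6 * (255 - 500*q)^21 + (((146759625815864530075240829726452841434448172783985392495489436502847 : ℝ)/12207031250000000000000000000000000000000000000000000000000000000000000) * (500*q - 222)^7 * (255 - 500*q)^20 + (((278819806983407182926232678105275625816949457968622059330144807608647 : ℝ)/9765625000000000000000000000000000000000000000000000000000000000000000) * (500*q - 222)^8 * (255 - 500*q)^19 + (((222753049346284325302901406974445896516015537503548293046092410251297 : ℝ)/3906250000000000000000000000000000000000000000000000000000000000000000) * (500*q - 222)^9 * (255 - 500*q)^18 + (((151193300311372235873393913146664061480798626980839189897926790317801 : ℝ)/1562500000000000000000000000000000000000000000000000000000000000000000) * (500*q - 222)^10 * (255 - 500*q)^17 + (((87830315068944199129951422046916892731673053978713732997306662125447 : ℝ)/625000000000000000000000000000000000000000000000000000000000000000000) * (500*q - 222)^11 *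 (255 - 500*q)^16 + (((10973451869690554251087732229855648215782388981994582897642858894977 : ℝ)/62500000000000000000000000000000000000000000000000000000000000000000) * (500*q - 222)^12 * (255 - 500*q)^15 + (((4733685403521433306718440223119837344683682220433215564204742474919 : ℝ)/25000000000000000000000000000000000000000000000000000000000000000000) * (500*q - 222)^13 * (255 - 500*q)^14 + (((1765639698674252467143310459729654841772107892890026328009914685379 : ℝ)/10000000000000000000000000000000000000000000000000000000000000000000) * (500*q - 222)^14 * (255 - 500*q)^13 + (((569565124453423340656304248476485014512424464540115689278854674813 : ℝ)/4000000000000000000000000000000000000000000000000000000000000000000) * (500*q - 222)^15 * (255 - 500*q)^12 + (((634776122574439401779230379197389133594814165924166945498832662387 : ℝ)/6400000000000000000000000000000000000000000000000000000000000000000) * (500*q - 222)^16 * (255 - 500*q)^11 + (((152320139401950092851985399191145290758814115438305137892568761461 : ℝ)/2560000000000000000000000000000000000000000000000000000000000000000) * (500*q - 222)^17 * (255 - 500*q)^10 + (((31331185338823410169955241466764890974326948225093784120447894917 : ℝ)/1024000000000000000000000000000000000000000000000000000000000000000) * (500*q - 222)^18 * (255 - 500*q)^9 + (((5486705506100928559272786447117636629114256081901664873994281931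 : ℝ)/409600000000000000000000000000000000000000000000000000000000000000) * (500*q - 222)^19 * (255 - 500*q)^8 + (((405126186716807291052915228653962475880899688235247677838725419 : ℝ)/81920000000000000000000000000000000000000000000000000000000000000) * (500*q - 222)^20 * (255 - 500*q)^7 + (((9958504199811065972500653205017364726903941283348947729497289 : ℝ)/6553600000000000000000000000000000000000000000000000000000000000) * (500*q - 222)^21 * (255 - 500*q)^6 + (((5001188711458934824967930824545664624479134218693498633587849 : ℝ)/13107200000000000000000000000000000000000000000000000000000000000) * (500*q - 222)^22 * (255 - 500*q)^5 + (((399960098132698838047956901130588157651164659229670428093271 : ℝ)/5242880000000000000000000000000000000000000000000000000000000000) * (500*q - 222)^23 * (255 - 500*q)^4 + (((9798940497391200153233996034537099830268289781173113196413 : ℝ)/838860800000000000000000000000000000000000000000000000000000000) * (500*q - 222)^24 * (255 - 500*q)^3 + (((2158565741752316826991694670646902527753986926671448696999 : ℝ)/1677721600000000000000000000000000000000000000000000000000000000) * (500*q - 222)^25 * (255 - 500*q)^2 + (((60906564400813742348907671840634526394738387982808138191 : ℝ)/671088640000000000000000000000000000000000000000000000000000000) * (500*q - 222)^26 * (255 -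 500*q)^1 + (((826748622017044850419228107546872211315041875343402497 : ℝ)/268435456000000000000000000000000000000000000000000000000000000) * (500*q - 222)^27 * (255 - 500*q)^0))))))))))))))))))))))))))) :=
    add_pos_of_pos_of_nonneg t0 (add_nonneg r1 (add_nonneg r2 (add_nonneg r3 (add_nonneg r4 (add_nonneg r5 (add_nonneg r6 (add_nonneg r7 (add_nonneg r8 (add_nonneg r9 (add_nonneg r10 (add_nonneg r11 (add_nonneg r12 (add_nonneg r13 (add_nonneg r14 (add_nonneg r15 (add_nonneg r16 (add_nonneg r17 (add_nonneg r18 (add_nonneg r19 (add_nonneg r20 (add_nonneg r21 (add_nonneg r22 (add_nonneg r23 (add_nonneg r24 (add_nonneg r25 (add_nonneg r26 (r27)))))))))))))))))))))))))))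
  have hCpos : (0:ℝ) < (1 - q) ^ 26 * 33 ^ 27 := by positivity
  by_contra hcon
  push_neg at hcon
  have hle : (gq q (4 / (1 - q) ^ 2) B - (8 / 25 + 3 / 4 * q)) * ((1 - q) ^ 26 * 33 ^ 27) ≤ 0 :=
    mul_nonpos_iff.mpr (Or.inr ⟨by linarith, hCpos.le⟩)
  rw [key] at hle
  exact absurd hle (not_le.mpr hpos)

lemma mainA (q : ℝ) (h1 : 111 / 250 ≤ q) (h2 : q ≤ 1 / 2) :
    ∃ δq ∈ Set.Ioo (0:ℝ) (4 / (1 - q) ^ 2), ∀ δ ∈ Set.Ioc δq (4 / (1 - q) ^ 2),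
      ∃ x ∈ Set.Icc (0:ℝ) 1, gq q δ (gq q δ (gq q δ x)) = x ∧ gq q δ x ≠ x := by
  have hq1 : (0:ℝ) < 1 - q := by linarith
  have hDpos : (0:ℝ) < 4 / (1 - q) ^ 2 := by positivity
  have hdrop : gq q (4 / (1 - q) ^ 2) ((1 + q) / 2) = 0 := gq_drop q (by linarith)
  have hF1 : gq q (4 / (1 - q) ^ 2) (gq q (4 / (1 - q) ^ 2)
      (gq q (4 / (1 - q) ^ 2) ((1 + q) / 2))) - (1 + q) / 2 < 0 := by
    rw [hdrop, gq_zero, gq_zero]; linarith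
  have hF2 : 0 < gq q (4 / (1 - q) ^ 2) (gq q (4 / (1 - q) ^ 2)
      (gq q (4 / (1 - q) ^ 2) (8 / 25 + 3 / 4 * q))) - (8 / 25 + 3 / 4 * q) := by
    have := hump_key q h1 h2; linarith
  have hcont1 : Continuous fun d : ℝ =>
      gq q d (gq q d (gq q d ((1 + q) / 2))) - (1 + q) / 2 := by
    unfold gq; fun_prop
  have hcont2 : Continuous fun d : ℝ =>
      gq q d (gq q d (gq q d (8 / 25 + 3 / 4 * q))) - (8 / 25 + 3 / 4 * q) := by
    unfold gq; fun_prop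
  have hev1 : ∀ᶠ d in nhds (4 / (1 - q) ^ 2),
      gq q d (gq q d (gq q d ((1 + q) / 2))) - (1 + q) / 2 < 0 :=
    (hcont1.tendsto _).eventually_lt_const hF1
  have hev2 : ∀ᶠ d in nhds (4 / (1 - q) ^ 2),
      0 < gq q d (gq q d (gq q d (8 / 25 + 3 / 4 * q))) - (8 / 25 + 3 / 4 * q) :=
    (hcont2.tendsto _).eventually_const_lt hF2
  have hev := hev1.and hev2
  rw [Metric.eventually_nhds_iff] at hev
  obtain ⟨ε, hε, hball⟩ := hev
  refine ⟨max (4 / (1 - q) ^ 2 - ε / 2) (4 / (1 - q) ^ 2 / 2), ⟨?_, ?_⟩, ?_⟩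
  · exact lt_max_of_lt_right (by linarith)
  · exact max_lt (by linarith) (by linarith)
  · intro δ hδ
    obtain ⟨hδ1, hδ2⟩ := hδ
    have hmax1 := le_max_left (4 / (1 - q) ^ 2 - ε / 2) (4 / (1 - q) ^ 2 / 2)
    have hmax2 := le_max_right (4 / (1 - q) ^ 2 - ε / 2) (4 / (1 - q) ^ 2 / 2)
    have hδpos : 0 < δ := by linarith
    have hdist : dist δ (4 / (1 - q) ^ 2) < ε := by
      rw [Real.dist_eq, abs_lt]; constructor <;> linarith
    obtain ⟨hneg, hpos⟩ := hball hdist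
    have hble : (8 / 25 + 3 / 4 * q : ℝ) ≤ (1 + q) / 2 := by linarith
    have hcont : ContinuousOn (fun x : ℝ => gq q δ (gq q δ (gq q δ x)) - x)
        (Set.Icc (8 / 25 + 3 / 4 * q) ((1 + q) / 2)) := by
      apply Continuous.continuousOn; unfold gq; fun_prop
    have hivt := intermediate_value_Icc' hble hcont
    have h0mem : (0:ℝ) ∈ Set.Icc
        (gq q δ (gq q δ (gq q δ ((1 + q) / 2))) - (1 + q) / 2)
        (gq q δ (gq q δ (gq q δ (8 / 25 + 3 / 4 * q))) - (8 / 25 + 3 / 4 * q)) :=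
      ⟨hneg.le, hpos.le⟩
    obtain ⟨x, hxmem, hx0⟩ := hivt h0mem
    obtain ⟨hxl, hxr⟩ := hxmem
    simp only at hx0
    have hfix : gq q δ (gq q δ (gq q δ x)) = x := by linarith
    have hxq : q < x := by linarith
    have hx1 : x < 1 := by linarith
    have hxpos : 0 < x := by linarith
    refine ⟨x, ⟨by linarith, by linarith⟩, hfix, ?_⟩
    have hlt : gq q δ x < x := by
      have e : gq q δ x = x - δ * (x * ((1 - x) * (x - q))) := by unfold gq; ring
      nlinarith [mul_pos (mul_pos hδpos hxpos)
        (mul_pos (by linarith : (0:ℝ) < 1 - x) (by linarith : (0:ℝ) < x - q))]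
    exact ne_of_lt hlt

lemma iter3 (f : ℝ → ℝ) (x : ℝ) : f^[3] x = f (f (f x)) := rfl

lemma iter3' (f : ℝ → ℝ) (x : ℝ) : f^[3] x = f (f^[2] x) := rfl

/-- Fix `q ∈ ((31 − 12√3)/23, (12√3 − 8)/23)` and let `δ* = min {4/q², 4/(1−q)²}`.
Let `g_δ x = x * (1 − δ*(1−x)*(x−q))`.  Then there exists `δ_q ∈ (0, δ*)` such
that for every `δ ∈ (δ_q, δ*]`, the map `g_δ` has a periodic point of period 3:
a point `x ∈ [0,1]` with `g_δ³(x) = x`, `g_δ(x) ≠ x` and `g_δ²(x) ≠ x`. -/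
theorem ppi_period_three (q : ℝ)
    (hq : q ∈ Set.Ioo ((31 - 12 * Real.sqrt 3) / 23) ((12 * Real.sqrt 3 - 8) / 23))
    (g : ℝ → ℝ → ℝ)
    (hg : ∀ δ x : ℝ, g δ x = x * (1 - δ * (1 - x) * (x - q))) :
    ∃ δq ∈ Set.Ioo (0:ℝ) (min (4 / q ^ 2) (4 / (1 - q) ^ 2)),
      ∀ δ ∈ Set.Ioc δq (min (4 / q ^ 2) (4 / (1 - q) ^ 2)),
        ∃ x ∈ Set.Icc (0:ℝ) 1,
          (g δ)^[3] x = x ∧ g δ x ≠ x ∧ (g δ)^[2] x ≠ x := by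
  obtain ⟨hql, hqu⟩ := hq
  have hs3 : Real.sqrt 3 ≤ 1.7321 := by
    nlinarith [Real.sq_sqrt (show (0:ℝ) ≤ 3 by norm_num), Real.sqrt_nonneg 3]
  have hq1 : 111 / 250 ≤ q := by nlinarith [hs3, hql]
  have hq2 : q ≤ 139 / 250 := by nlinarith [hs3, hqu]
  have hgf : ∀ δ : ℝ, g δ = gq q δ := fun δ => funext fun x => by rw [hg]; rfl
  rcases le_total q (1 / 2) with hhalf | hhalf
  · have hq0 : (0:ℝ) < q := by linarith
    have hmin : min (4 / q ^ 2) (4 / (1 - q) ^ 2) = 4 / (1 - q) ^ 2 := by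
      apply min_eq_right
      rw [div_le_div_iff₀ (pow_pos (by linarith : (0:ℝ) < 1 - q) 2) (pow_pos hq0 2)]
      nlinarith
    rw [hmin]
    obtain ⟨δq, hδqm, hmain⟩ := mainA q hq1 hhalf
    refine ⟨δq, hδqm, ?_⟩
    intro δ hδ
    obtain ⟨x, hx, h3, h1⟩ := hmain δ hδ
    refine ⟨x, hx, ?_, ?_, ?_⟩
    · rw [hgf, iter3]; exact h3
    · rw [hgf]; exact h1
    · intro hcontra
      apply h1
      rw [hgf] at hcontra
      have e1 : (gq q δ)^[3] x = gq q δ x := by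
        rw [iter3', hcontra]
      rw [iter3, h3] at e1
      exact e1.symm
  · have hq0 : (0:ℝ) < 1 - q := by linarith
    have hmin : min (4 / q ^ 2) (4 / (1 - q) ^ 2) = 4 / q ^ 2 := by
      apply min_eq_left
      rw [div_le_div_iff₀ (pow_pos (by linarith : (0:ℝ) < q) 2) (pow_pos hq0 2)]
      nlinarith
    rw [hmin]
    obtain ⟨δq, hδqm, hmain⟩ := mainA (1 - q) (by linarith) (by linarith)
    have e : (1:ℝ) - (1 - q) = q := by ring
    rw [e] at hδqm hmain
    refine ⟨δq, hδqm, ?_⟩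
    intro δ hδ
    obtain ⟨x', hx', h3, h1⟩ := hmain δ hδ
    have hc1 : gq q δ (1 - x') = 1 - gq (1 - q) δ x' := gq_conj q δ x'
    have hc3 : gq q δ (gq q δ (gq q δ (1 - x'))) =
        1 - gq (1 - q) δ (gq (1 - q) δ (gq (1 - q) δ x')) := by
      rw [gq_conj, gq_conj, gq_conj]
    refine ⟨1 - x', ⟨by linarith [hx'.2], by linarith [hx'.1]⟩, ?_, ?_, ?_⟩
    · rw [hgf, iter3, hc3, h3]
    · rw [hgf, hc1]
      intro hcon; apply h1; linarith
    · intro hcontra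
      apply h1
      rw [hgf] at hcontra
      have e1 : (gq q δ)^[3] (1 - x') = gq q δ (1 - x') := by rw [iter3', hcontra]
      rw [iter3, hc3, h3, hc1] at e1
      linarith
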